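/- For k ≥ 0 with binary expansion k = Σ β_i 2^i, define n_3(k) = Σ_{i odd} β_i 2^{(i-1)/2}, n_5(k) = Σ_{i even, i≥2} β_i 2^{(i-2)/2}, and h(k) = n_3(k) + n_5(k). Then for every odd k > 0, (1/2)·k^{1/2} < h(k) + 1 < (3/2)·k^{1/2}. -/

import Mathlib

open PowerSeries
open scoped Classical

/-- Δ mod 2: the power series Σ_{m≥0} q^{(2m+1)^2} over F_2. -/
noncomputable def Delta : PowerSeries (ZMod 2) :=
  PowerSeries.mk fun n => if ∃ m : ℕ, n = (2 * m + 1) ^ 2 then 1 else 0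

/-- The mod 2 Hecke operator T_p on formal power series over F_2. -/
noncomputable def hecke (p : ℕ) (f : PowerSeries (ZMod 2)) : PowerSeries (ZMod 2) :=
  PowerSeries.mk fun n =>
    PowerSeries.coeff (p * n) f +
      if p ∣ n then PowerSeries.coeff (n / p) f else 0

/-- n_3(k) = Σ_{i odd} β_i 2^{(i-1)/2}, from the binary digits β of k. -/
def n3 (k : ℕ) : ℕ := ∑ i ∈ Finset.range k, if k.testBit (2 * i + 1) then 2 ^ i else 0

/-- n_5(k) = Σ_{i ≥ 2 even} β_i 2^{(i-2)/2}. -/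
def n5 (k : ℕ) : ℕ := ∑ i ∈ Finset.range k, if k.testBit (2 * i + 2) then 2 ^ i else 0

def hh (k : ℕ) : ℕ := n3 k + n5 k

/-- the strict domination relation -/
def domLt (k l : ℕ) : Prop := hh k < hh l ∨ (hh k = hh l ∧ n5 k < n5 l)

lemma bit_false (k i : ℕ) (h : k ≤ i) : k.testBit (2 * i + 1) = false ∧
    k.testBit (2 * i + 2) = false := by
  constructor <;> apply Nat.testBit_eq_false_of_lt <;>
    calc k < 2 ^ k := Nat.lt_two_pow_self
      _ ≤ _ := Nat.pow_le_pow_right (by norm_num) (by omega)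

lemma n3_ext (k N : ℕ) (h : k ≤ N) :
    n3 k = ∑ i ∈ Finset.range N, if k.testBit (2 * i + 1) then 2 ^ i else 0 := by
  unfold n3
  apply Finset.sum_subset (Finset.range_subset_range.2 h)
  intro i _ hik
  simp only [Finset.mem_range, not_lt] at hik
  rw [(bit_false k i hik).1]
  simp

lemma n5_ext (k N : ℕ) (h : k ≤ N) :
    n5 k = ∑ i ∈ Finset.range N, if k.testBit (2 * i + 2) then 2 ^ i else 0 := by
  unfold n5
  apply Finset.sum_subset (Finset.range_subset_range.2 h)
  intro i _ hik
  simp only [Finset.mem_range, not_lt] at hik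
  rw [(bit_false k i hik).2]
  simp

lemma bit_div4 (k j : ℕ) : (k / 4).testBit j = k.testBit (j + 2) := by
  rw [show k / 4 = k / 2 / 2 by omega, Nat.testBit_div_two, Nat.testBit_div_two]

lemma n3_rec (k : ℕ) :
    n3 k = (if k.testBit 1 then 1 else 0) + 2 * n3 (k / 4) := by
  rw [n3_ext k (k + 1) (by omega), Finset.sum_range_succ',
    n3_ext (k / 4) k (Nat.div_le_self _ _), Finset.mul_sum]
  have : ∀ i, (if k.testBit (2 * (i + 1) + 1) then 2 ^ (i + 1) else 0)
      = 2 * if (k / 4).testBit (2 * i + 1) then 2 ^ i else 0 := by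
    intro i
    rw [bit_div4, show 2 * i + 1 + 2 = 2 * (i + 1) + 1 by ring]
    split <;> ring
  simp only [this]
  norm_num
  omega

lemma n5_rec (k : ℕ) :
    n5 k = (if k.testBit 2 then 1 else 0) + 2 * n5 (k / 4) := by
  rw [n5_ext k (k + 1) (by omega), Finset.sum_range_succ',
    n5_ext (k / 4) k (Nat.div_le_self _ _), Finset.mul_sum]
  have : ∀ i, (if k.testBit (2 * (i + 1) + 2) then 2 ^ (i + 1) else 0)
      = 2 * if (k / 4).testBit (2 * i + 2) then 2 ^ i else 0 := by
    intro i
    rw [bit_div4, show 2 * i + 2 + 2 = 2 * (i + 1) + 2 by ring]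
    split <;> ring
  simp only [this]
  norm_num
  omega

lemma n3_zero : n3 0 = 0 := by simp [n3]
lemma n5_zero : n5 0 = 0 := by simp [n5]

lemma key (k : ℕ) : k ≤ 2 * (n3 k) ^ 2 + 4 * (n5 k) ^ 2 + k % 2 ∧
    2 * (n3 k) ^ 2 + 4 * (n3 k) + 4 * (n5 k) ^ 2 + 8 * (n5 k) + 3 * (k % 2) ≤ 3 * k := by
  induction k using Nat.strong_induction_on with
  | _ k IH =>
    rcases Nat.eq_zero_or_pos k with rfl | hk
    · simp [n3_zero, n5_zero]
    · obtain ⟨IH1, IH2⟩ := IH (k / 4) (by omega)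
      rw [n3_rec k, n5_rec k]
      have hb1 : k.testBit 1 = decide (k / 2 % 2 = 1) := by
        rw [Nat.testBit_eq_decide_div_mod_eq]
      have hb2 : k.testBit 2 = decide (k / 4 % 2 = 1) := by
        rw [Nat.testBit_eq_decide_div_mod_eq]
      set a := n3 (k / 4) with ha
      set b := n5 (k / 4) with hbb
      rw [hb1, hb2]
      set x := k / 2 % 2 with hx
      set y := k / 4 % 2 with hy
      have hx1 : x = 0 ∨ x = 1 := by omega
      have hy1 : y = 0 ∨ y = 1 := by omega
      have hk4 : k = k % 2 + 2 * x + 4 * (k / 4) := by omega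
      rcases hx1 with hx1 | hx1 <;> rcases hy1 with hy1 | hy1 <;>
        simp only [hx1, hy1] <;> norm_num <;>
        first
          | (constructor <;> nlinarith [sq_nonneg a, sq_nonneg b])
          | nlinarith [sq_nonneg a, sq_nonneg b]

theorem stmt12 (k : ℕ) (hk : Odd k) (hk0 : 0 < k) :
    (1 / 2 : ℝ) * Real.sqrt k < hh k + 1 ∧ (hh k + 1 : ℝ) < (3 / 2) * Real.sqrt k := by
  obtain ⟨K1, K2⟩ := key k
  have hmod : k % 2 = 1 := Nat.odd_iff.mp hk
  rw [hmod] at K1 K2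
  set a := n3 k
  set b := n5 k
  have hhk : hh k = a + b := rfl
  have C1 : (k : ℝ) ≤ 2 * a ^ 2 + 4 * b ^ 2 + 1 := by exact_mod_cast K1
  have C2 : 2 * (a : ℝ) ^ 2 + 4 * a + 4 * b ^ 2 + 8 * b + 3 ≤ 3 * k := by exact_mod_cast K2
  have H1 : (k : ℝ) < (2 * ((a + b : ℕ) + 1)) ^ 2 := by
    push_cast
    nlinarith [sq_nonneg ((a : ℝ) + b), sq_nonneg ((a : ℝ) - b)]
  have H2 : ((2 / 3 : ℝ) * ((a + b : ℕ) + 1)) ^ 2 < k := by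
    push_cast
    nlinarith [sq_nonneg ((a : ℝ) - 2 * b)]
  have hs1 : Real.sqrt k < 2 * ((a + b : ℕ) + 1) := by
    rw [Real.sqrt_lt' (by positivity)]
    exact H1
  have hs2 : (2 / 3 : ℝ) * ((a + b : ℕ) + 1) < Real.sqrt k :=
    (Real.lt_sqrt (by positivity)).mpr H2
  constructor
  · rw [hhk]; push_cast at hs1 ⊢; linarith
  · rw [hhk]; push_cast at hs2 ⊢; linarith
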